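/- Let A ∈ M_m(ℂ) and B ∈ M_n(ℂ) be Hermitian and suppose U_{A⊗B} = C' ⊗ D' for some matrices C' ∈ M_m(ℂ), D' ∈ M_n(ℂ). Then there exist Hermitian matrices C ∈ M_m(ℂ) and D ∈ M_n(ℂ) with U_{A⊗B} = U_C ⊗ U_D. -/

import Mathlib

open Matrix Kronecker Complex Polynomial


lemma star_dot_self_eq_zero {k : Type*} [Fintype k] {v : k → ℂ}
    (h : star v ⬝ᵥ v = 0) : v = 0 := by
  have hcast : ((∑ i, Complex.normSq (v i) : ℝ) : ℂ) = star v ⬝ᵥ v := by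
    push_cast
    simp [dotProduct, Complex.normSq_eq_conj_mul_self]
  have hsum : (∑ i, Complex.normSq (v i) : ℝ) = 0 := by
    exact_mod_cast hcast.trans h
  have hz := (Finset.sum_eq_zero_iff_of_nonneg
    (fun i _ => Complex.normSq_nonneg (v i))).mp hsum
  funext i
  exact Complex.normSq_eq_zero.mp (hz i (Finset.mem_univ i))

lemma hermAddI_isUnit {k : Type*} [Fintype k] [DecidableEq k] {M : Matrix k k ℂ}
    (hM : M.IsHermitian) : IsUnit (M + Complex.I • 1) := by
  rw [Matrix.isUnit_iff_isUnit_det, isUnit_iff_ne_zero]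
  intro hdet
  obtain ⟨v, hv, hveq⟩ := (Matrix.exists_mulVec_eq_zero_iff).mpr hdet
  have hMv : M.mulVec v = -(Complex.I • v) := by
    rw [Matrix.add_mulVec, Matrix.smul_mulVec, Matrix.one_mulVec] at hveq
    linear_combination (norm := module) hveq
  set s : ℂ := star v ⬝ᵥ v with hs
  have hsreal : star s = s := by
    simp [hs, dotProduct, map_sum, mul_comm]
  have ht : star v ⬝ᵥ M.mulVec v = star (star v ⬝ᵥ M.mulVec v) := by
    conv_lhs => rw [Matrix.star_dotProduct, Matrix.star_mulVec, hM.eq,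
      ← Matrix.dotProduct_mulVec]
  rw [hMv] at ht
  have h1 : star v ⬝ᵥ -(Complex.I • v) = -(Complex.I * s) := by
    simp [hs, smul_eq_mul]
  rw [h1, star_neg, star_mul', hsreal, Complex.star_def, Complex.conj_I] at ht
  have h2 : Complex.I * s = 0 := by linear_combination -ht / 2
  have hs0 : s = 0 := (mul_eq_zero.mp h2).resolve_left Complex.I_ne_zero
  exact hv (star_dot_self_eq_zero hs0)

lemma hermSubI_isUnit {k : Type*} [Fintype k] [DecidableEq k] {M : Matrix k k ℂ}
    (hM : M.IsHermitian) : IsUnit (M - Complex.I • 1) := by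
  have h := hermAddI_isUnit hM
  have hct : (M + Complex.I • 1)ᴴ = M - Complex.I • 1 := by
    rw [conjTranspose_add, hM.eq, conjTranspose_smul, conjTranspose_one,
      Complex.star_def, Complex.conj_I, neg_smul, ← sub_eq_add_neg]
  rw [Matrix.isUnit_iff_isUnit_det, isUnit_iff_ne_zero] at *
  rw [← hct, Matrix.det_conjTranspose]
  simpa using h


noncomputable def cayley {n : Type*} [Fintype n] [DecidableEq n]
    (A : Matrix n n ℂ) : Matrix n n ℂ :=
  (A - Complex.I • 1) * (A + Complex.I • 1)⁻¹

lemma inv_cayley {k : Type*} [Fintype k] [DecidableEq k] {U : Matrix k k ℂ}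
    (hU : Uᴴ * U = 1) (h1 : IsUnit (1 - U)) :
    ∃ C : Matrix k k ℂ, C.IsHermitian ∧ cayley C = U := by
  have h1d : IsUnit (1 - U).det := (Matrix.isUnit_iff_isUnit_det _).mp h1
  have hU' : U * Uᴴ = 1 := mul_eq_one_comm.mpr hU
  set V : Matrix k k ℂ := (1 - U)⁻¹ with hV
  have hVl : (1 - U) * V = 1 := Matrix.mul_nonsing_inv _ h1d
  have hVr : V * (1 - U) = 1 := Matrix.nonsing_inv_mul _ h1d
  have hVdet : IsUnit V.det := by
    rw [hV, Matrix.det_nonsing_inv]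
    simp only [Ring.inverse_eq_inv']
    exact isUnit_iff_ne_zero.mpr (inv_ne_zero (isUnit_iff_ne_zero.mp h1d))
  have hcomm : (1 + U) * V = V * (1 + U) := by
    calc (1 + U) * V = V * ((1 - U) * ((1 + U) * V)) := by
          rw [← Matrix.mul_assoc, hVr, Matrix.one_mul]
      _ = V * ((1 + U) * ((1 - U) * V)) := by
          congr 1
          rw [← Matrix.mul_assoc, ← Matrix.mul_assoc]
          congr 1
          noncomm_ring
      _ = V * (1 + U) := by rw [hVl, Matrix.mul_one]
  have hUV : U * V = V * U := by
    have h := hcomm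
    simp only [Matrix.add_mul, Matrix.mul_add, Matrix.one_mul, Matrix.mul_one] at h
    exact add_left_cancel h
  set C : Matrix k k ℂ := Complex.I • ((1 + U) * V) with hC
  have hVstar : Vᴴ = -(V * U) := by
    rw [hV, Matrix.conjTranspose_nonsing_inv]
    apply Matrix.inv_eq_left_inv
    have h2 : (1 - U)ᴴ = 1 - Uᴴ := by rw [conjTranspose_sub, conjTranspose_one]
    have h3 : V * (1 - U) = V - V * U := by rw [Matrix.mul_sub, Matrix.mul_one]
    rw [h2, neg_mul, Matrix.mul_sub, Matrix.mul_one, Matrix.mul_assoc, hU',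
      Matrix.mul_one, neg_sub, ← h3, hVr]
  have hherm : C.IsHermitian := by
    rw [Matrix.IsHermitian, hC, conjTranspose_smul, conjTranspose_mul, hVstar,
      conjTranspose_add, conjTranspose_one, Complex.star_def, Complex.conj_I]
    have key : -(V * U) * (1 + Uᴴ) = -((1 + U) * V) := by
      simp only [Matrix.neg_mul, Matrix.mul_add, Matrix.add_mul, Matrix.mul_one,
        Matrix.one_mul, Matrix.mul_assoc, hU', hUV]
      abel
    rw [key, neg_smul, smul_neg, neg_neg]
  have ha : (1 + U) * V + (1 - U) * V = (2 : ℂ) • V := by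
    rw [← Matrix.add_mul]
    have hb : ((1 : Matrix k k ℂ) + U) + (1 - U) = (2 : ℂ) • (1 : Matrix k k ℂ) := by
      module
    rw [hb, Matrix.smul_mul, Matrix.one_mul]
  have h2smul : C + Complex.I • 1 = (2 * Complex.I) • V := by
    rw [hC, ← smul_add]
    have hx : (1 + U) * V + 1 = (2 : ℂ) • V := by
      rw [← ha]
      congr 1
      exact hVl.symm
    rw [hx, smul_smul]
    ring_nf
  have hc2 : (1 + U) * V - (1 - U) * V = (2 : ℂ) • (U * V) := by
    rw [← Matrix.sub_mul]
    have : ((1 : Matrix k k ℂ) + U) - (1 - U) = (2 : ℂ) • U := by module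
    rw [this, Matrix.smul_mul]
  have h2minus : C - Complex.I • 1 = U * (C + Complex.I • 1) := by
    rw [h2smul, hC, ← smul_sub]
    have hx : (1 + U) * V - 1 = (2 : ℂ) • (U * V) := by
      rw [← hc2]
      congr 1
      exact hVl.symm
    rw [hx, smul_smul, mul_smul_comm, mul_comm]
  have hunitplus : IsUnit (C + Complex.I • 1).det := by
    rw [h2smul, Matrix.det_smul]
    exact (isUnit_iff_ne_zero.mpr (pow_ne_zero _ (by
      simp [Complex.I_ne_zero, two_ne_zero]))).mul hVdet
  refine ⟨C, hherm, ?_⟩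
  unfold cayley
  rw [h2minus, Matrix.mul_assoc, Matrix.mul_nonsing_inv _ hunitplus, Matrix.mul_one]

lemma cayley_unitary {k : Type*} [Fintype k] [DecidableEq k] {M : Matrix k k ℂ}
    (hM : M.IsHermitian) : (cayley M)ᴴ * cayley M = 1 := by
  have hu1 : IsUnit (M + Complex.I • 1).det :=
    (Matrix.isUnit_iff_isUnit_det _).mp (hermAddI_isUnit hM)
  have hu2 : IsUnit (M - Complex.I • 1).det :=
    (Matrix.isUnit_iff_isUnit_det _).mp (hermSubI_isUnit hM)
  have hstar : (cayley M)ᴴ = (M - Complex.I • 1)⁻¹ * (M + Complex.I • 1) := by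
    unfold cayley
    rw [conjTranspose_mul, Matrix.conjTranspose_nonsing_inv]
    congr 1
    · rw [conjTranspose_add, hM.eq, conjTranspose_smul, conjTranspose_one,
        Complex.star_def, Complex.conj_I, neg_smul, ← sub_eq_add_neg]
    · rw [conjTranspose_sub, hM.eq, conjTranspose_smul, conjTranspose_one,
        Complex.star_def, Complex.conj_I, neg_smul, sub_neg_eq_add]
  have hcomm : (M + Complex.I • 1) * (M - Complex.I • 1)
      = (M - Complex.I • 1) * (M + Complex.I • 1) := by
    have hc : Commute M (Complex.I • (1 : Matrix k k ℂ)) :=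
      (Commute.one_right M).smul_right Complex.I
    rw [add_mul, mul_sub, mul_sub, sub_mul, mul_add, mul_add, hc.eq]
    abel
  rw [hstar]
  unfold cayley
  rw [Matrix.mul_assoc, ← Matrix.mul_assoc (M + Complex.I • 1), hcomm,
    Matrix.mul_assoc, Matrix.mul_nonsing_inv _ hu1, Matrix.mul_one,
    Matrix.nonsing_inv_mul _ hu2]

lemma charpoly_eval {k : Type*} [Fintype k] [DecidableEq k] (M : Matrix k k ℂ) (x : ℂ) :
    M.charpoly.eval x = (x • 1 - M).det := by
  rw [Matrix.charpoly, ← Polynomial.coe_evalRingHom, RingHom.map_det]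
  congr 1
  ext i j
  by_cases h : i = j <;>
    simp [h, Matrix.charmatrix_apply, Matrix.one_apply, Matrix.diagonal_apply]

lemma circle_infinite : {z : ℂ | ‖z‖ = 1}.Infinite := by
  have hinj : Set.InjOn (fun t : ℝ => Complex.exp (t * Complex.I)) (Set.Ioo 0 1) := by
    intro a ha b hb hab
    simp only at hab
    rw [Complex.exp_eq_exp_iff_exists_int] at hab
    obtain ⟨n, hn⟩ := hab
    have him := congrArg Complex.im hn
    simp [Complex.add_im, Complex.mul_im] at him
    -- him : a = b + n * (2*π)
    have hπ : (1:ℝ) < 2 * Real.pi := by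
      have := Real.pi_gt_three
      linarith
    rcases ha with ⟨ha0, ha1⟩
    rcases hb with ⟨hb0, hb1⟩
    have hn0 : n = 0 := by
      rcases lt_trichotomy n 0 with h | h | h
      · exfalso
        have : (n : ℝ) ≤ -1 := by exact_mod_cast (by omega : n ≤ -1)
        nlinarith [Real.pi_gt_three]
      · exact h
      · exfalso
        have : (1:ℝ) ≤ (n : ℝ) := by exact_mod_cast h
        nlinarith [Real.pi_gt_three]
    rw [hn0] at him
    simpa using him
  have himg := (Set.Ioo_infinite (by norm_num : (0:ℝ) < 1)).image hinj
  refine himg.mono ?_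
  rintro z ⟨t, _, rfl⟩
  simp [Complex.norm_exp]

lemma kron_conjTranspose {m n : Type*} (A : Matrix m m ℂ) (B : Matrix n n ℂ) :
    (A ⊗ₖ B)ᴴ = Aᴴ ⊗ₖ Bᴴ := by
  ext ⟨i, j⟩ ⟨k, l⟩
  simp [Matrix.conjTranspose_apply, Matrix.kroneckerMap_apply, star_mul']

lemma exists_good_z {p q : Type*} [Fintype p] [DecidableEq p] [Fintype q] [DecidableEq q]
    (Mc : Matrix p p ℂ) (Md : Matrix q q ℂ) :
    ∃ z : ℂ, ‖z‖ = 1 ∧ IsUnit (1 - z • Mc) ∧ IsUnit (1 - z⁻¹ • Md) := by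
  classical
  set S : Finset ℂ := Md.charpoly.roots.toFinset ∪ Mc.charpoly.roots.toFinset.image (·⁻¹)
    with hS
  have hinf : ({z : ℂ | ‖z‖ = 1} \ (S : Set ℂ)).Infinite :=
    circle_infinite.diff (S.finite_toSet)
  obtain ⟨z, hz1, hz2⟩ := hinf.nonempty
  have hzabs : ‖z‖ = 1 := hz1
  have hzne : z ≠ 0 := by
    intro h
    rw [h] at hzabs
    simp at hzabs
  refine ⟨z, hzabs, ?_, ?_⟩
  · have hkey : Mc.charpoly.eval z⁻¹ ≠ 0 := by
      intro h0
      apply hz2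
      rw [hS]
      apply Finset.mem_coe.mpr
      apply Finset.mem_union_right
      apply Finset.mem_image.mpr
      refine ⟨z⁻¹, ?_, inv_inv z⟩
      rw [Multiset.mem_toFinset, Polynomial.mem_roots (Mc.charpoly_monic.ne_zero)]
      exact h0
    rw [charpoly_eval] at hkey
    have heq : 1 - z • Mc = z • (z⁻¹ • (1 : Matrix p p ℂ) - Mc) := by
      rw [smul_sub, smul_smul, mul_inv_cancel₀ hzne, one_smul]
    rw [heq, Matrix.isUnit_iff_isUnit_det, Matrix.det_smul, isUnit_iff_ne_zero]
    exact mul_ne_zero (pow_ne_zero _ hzne) hkey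
  · have hkey : Md.charpoly.eval z ≠ 0 := by
      intro h0
      apply hz2
      rw [hS]
      apply Finset.mem_coe.mpr
      apply Finset.mem_union_left
      rw [Multiset.mem_toFinset, Polynomial.mem_roots (Md.charpoly_monic.ne_zero)]
      exact h0
    rw [charpoly_eval] at hkey
    have hzinv : z⁻¹ ≠ 0 := inv_ne_zero hzne
    have heq : 1 - z⁻¹ • Md = z⁻¹ • (z • (1 : Matrix q q ℂ) - Md) := by
      rw [smul_sub, smul_smul, inv_mul_cancel₀ hzne, one_smul]
    rw [heq, Matrix.isUnit_iff_isUnit_det, Matrix.det_smul, isUnit_iff_ne_zero]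
    exact mul_ne_zero (pow_ne_zero _ hzinv) hkey

theorem stmt_15 {m n : ℕ} (A : Matrix (Fin m) (Fin m) ℂ) (B : Matrix (Fin n) (Fin n) ℂ)
    (hA : A.IsHermitian) (hB : B.IsHermitian)
    (hsep : ∃ (C' : Matrix (Fin m) (Fin m) ℂ) (D' : Matrix (Fin n) (Fin n) ℂ),
      cayley (A ⊗ₖ B) = C' ⊗ₖ D') :
    ∃ (C : Matrix (Fin m) (Fin m) ℂ) (D : Matrix (Fin n) (Fin n) ℂ),
      C.IsHermitian ∧ D.IsHermitian ∧ cayley (A ⊗ₖ B) = cayley C ⊗ₖ cayley D := by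
  obtain ⟨C', D', hsep⟩ := hsep
  rcases Nat.eq_zero_or_pos m with hm | hm'
  · subst hm
    refine ⟨0, 0, Matrix.isHermitian_zero, Matrix.isHermitian_zero, ?_⟩
    ext ⟨i, j⟩ ⟨k, l⟩
    exact i.elim0
  rcases Nat.eq_zero_or_pos n with hn | hn'
  · subst hn
    refine ⟨0, 0, Matrix.isHermitian_zero, Matrix.isHermitian_zero, ?_⟩
    ext ⟨i, j⟩ ⟨k, l⟩
    exact j.elim0
  have hherm : (A ⊗ₖ B).IsHermitian := by
    rw [Matrix.IsHermitian, kron_conjTranspose, hA.eq, hB.eq]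
  have hU : (cayley (A ⊗ₖ B))ᴴ * cayley (A ⊗ₖ B) = 1 := cayley_unitary hherm
  rw [hsep, kron_conjTranspose, ← Matrix.mul_kronecker_mul] at hU
  set i0 : Fin m := ⟨0, hm'⟩ with hi0
  set j0 : Fin n := ⟨0, hn'⟩ with hj0
  set P := C'ᴴ * C' with hP
  set Q := D'ᴴ * D' with hQ
  have hentry : ∀ (i k : Fin m) (j l : Fin n),
      P i k * Q j l = if i = k ∧ j = l then 1 else 0 := by
    intro i k j l
    have h := congrFun (congrFun hU (i, j)) (k, l)
    simpa [Matrix.kroneckerMap_apply, Matrix.one_apply, Prod.ext_iff] using h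
  set c := P i0 i0 with hc
  set q := Q j0 j0 with hq
  have hcq : c * q = 1 := by simpa using hentry i0 i0 j0 j0
  have hcne : c ≠ 0 := left_ne_zero_of_mul_eq_one hcq
  have hcr : ((∑ k, Complex.normSq (C' k i0) : ℝ) : ℂ) = c := by
    rw [hc, hP]
    push_cast
    simp [Matrix.mul_apply, Matrix.conjTranspose_apply, Complex.normSq_eq_conj_mul_self]
  set r : ℝ := ∑ k, Complex.normSq (C' k i0) with hr
  have hrne : r ≠ 0 := by
    intro h
    apply hcne
    rw [← hcr, h]
    simp
  have hrpos : 0 < r :=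
    lt_of_le_of_ne (Finset.sum_nonneg fun _ _ => Complex.normSq_nonneg _) (Ne.symm hrne)
  set sr := Real.sqrt r with hsr
  have hsrpos : 0 < sr := Real.sqrt_pos.mpr hrpos
  have hsrsq : sr * sr = r := Real.mul_self_sqrt hrpos.le
  have hqr : q = ((r⁻¹ : ℝ) : ℂ) := by
    have h1 : q = c⁻¹ := eq_inv_of_mul_eq_one_left (by rwa [mul_comm] at hcq)
    rw [h1, ← hcr]
    push_cast
    ring
  set Mc : Matrix (Fin m) (Fin m) ℂ := ((sr⁻¹ : ℝ) : ℂ) • C' with hMc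
  set Md : Matrix (Fin n) (Fin n) ℂ := ((sr : ℝ) : ℂ) • D' with hMd
  have hMcU : Mcᴴ * Mc = 1 := by
    rw [hMc, conjTranspose_smul, Matrix.smul_mul, Matrix.mul_smul, smul_smul, ← hP]
    have hscal : star ((sr⁻¹ : ℝ) : ℂ) * ((sr⁻¹ : ℝ) : ℂ) = q := by
      rw [Complex.star_def, Complex.conj_ofReal, hqr]
      push_cast
      rw [← mul_inv]
      norm_cast
      rw [hsrsq]
    rw [hscal]
    ext i k
    have h := hentry i k j0 j0
    simp only [and_true, eq_self_iff_true] at h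
    simp only [Matrix.smul_apply, Matrix.one_apply, smul_eq_mul]
    rw [mul_comm]
    simpa using h
  have hMdU : Mdᴴ * Md = 1 := by
    rw [hMd, conjTranspose_smul, Matrix.smul_mul, Matrix.mul_smul, smul_smul, ← hQ]
    have hscal : star ((sr : ℝ) : ℂ) * ((sr : ℝ) : ℂ) = c := by
      rw [Complex.star_def, Complex.conj_ofReal, ← hcr]
      exact_mod_cast hsrsq
    rw [hscal]
    ext j l
    have h := hentry i0 i0 j l
    simp only [true_and, eq_self_iff_true] at h
    simp only [Matrix.smul_apply, Matrix.one_apply, smul_eq_mul]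
    simpa using h
  have hfact : Mc ⊗ₖ Md = C' ⊗ₖ D' := by
    rw [hMc, hMd, Matrix.smul_kronecker, Matrix.kronecker_smul, smul_smul]
    have h1 : ((sr⁻¹ : ℝ) : ℂ) * ((sr : ℝ) : ℂ) = 1 := by
      push_cast
      exact inv_mul_cancel₀ (by exact_mod_cast hsrpos.ne')
    rw [h1, one_smul]
  obtain ⟨z, hz1, hz2, hz3⟩ := exists_good_z Mc Md
  have hzne : z ≠ 0 := by
    intro h
    rw [h] at hz1
    simp at hz1
  have hstarz : star z * z = 1 := by
    rw [Complex.star_def, mul_comm, Complex.mul_conj]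
    rw [Complex.normSq_eq_norm_sq, hz1]
    norm_num
  have hUc : (z • Mc)ᴴ * (z • Mc) = 1 := by
    rw [conjTranspose_smul, Matrix.smul_mul, Matrix.mul_smul, smul_smul, hMcU, hstarz,
      one_smul]
  have hstarzi : star z⁻¹ * z⁻¹ = 1 := by
    rw [Complex.star_def, mul_comm, Complex.mul_conj, Complex.normSq_eq_norm_sq, norm_inv, hz1]
    norm_num
  have hUd : (z⁻¹ • Md)ᴴ * (z⁻¹ • Md) = 1 := by
    rw [conjTranspose_smul, Matrix.smul_mul, Matrix.mul_smul, smul_smul, hMdU, hstarzi,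
      one_smul]
  obtain ⟨C, hCh, hCc⟩ := inv_cayley hUc hz2
  obtain ⟨D, hDh, hDc⟩ := inv_cayley hUd hz3
  refine ⟨C, D, hCh, hDh, ?_⟩
  rw [hCc, hDc]
  have hzz : (z • Mc) ⊗ₖ (z⁻¹ • Md) = Mc ⊗ₖ Md := by
    rw [Matrix.smul_kronecker, Matrix.kronecker_smul, smul_smul, mul_inv_cancel₀ hzne,
      one_smul]
  rw [hzz, hfact, hsep]
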